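/- arXiv:2101.11075 — 5 statements merged into one kernel-verified Lean document; each statement's English description precedes it below -/
import Mathlib

section
/- (Lyapunov step, base case.) The first MADGRAD step satisfies V_{a_1}(−s_1) ≤ (λ_0² / 2) · ∑_{d=1}^{D} g_{0,d}² / a_{0,d}, where a_k denotes the componentwise denominator vector a_k := (λ_k G² + v_k)^{1/3} (so a_0 has every entry equal to (λ_0 G²)^{1/3}). -/
open Finset
open scoped RealInnerProductSpace

/-- Lyapunov step, base case: the first MADGRAD step satisfies
`V_{a_1}(−s_1) ≤ (λ_0²/2) ∑_d g_{0,d}²/a_{0,d}`, where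
`a_k := (λ_k G² + v_k)^{1/3}` componentwise. -/
theorem madgrad_lyapunov_base (D : ℕ) (hD : 1 ≤ D) (G γ : ℝ) (hG : 0 < G)
    (hγ : 0 < γ) (x0 : EuclideanSpace ℝ (Fin D))
    -- support-type function
    (V : (Fin D → ℝ) → EuclideanSpace ℝ (Fin D) → ℝ)
    (hV : ∀ (b : Fin D → ℝ) (u : EuclideanSpace ℝ (Fin D)),
      V b u = ⨆ x : EuclideanSpace ℝ (Fin D),
        (⟪u, x - x0⟫ - (1 / 2) * ∑ d : Fin D, b d * (x d - x0 d) ^ 2))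
    -- step-size and momentum sequences
    (lam c : ℕ → ℝ)
    (hlam : ∀ k : ℕ, lam k = γ * Real.sqrt ((k : ℝ) + 1))
    (hc : ∀ k : ℕ, c k = (3 / 2) / ((k : ℝ) + 3 / 2))
    -- convex losses and subgradients
    (f : ℕ → EuclideanSpace ℝ (Fin D) → ℝ)
    (hf : ∀ k, ConvexOn ℝ Set.univ (f k))
    (x z : ℕ → EuclideanSpace ℝ (Fin D))
    (s v : ℕ → EuclideanSpace ℝ (Fin D)) (a : ℕ → Fin D → ℝ)
    (g : ℕ → EuclideanSpace ℝ (Fin D))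
    (hg_subgrad : ∀ k, ∀ y : EuclideanSpace ℝ (Fin D),
      f k (x k) + ⟪g k, y - x k⟫ ≤ f k y)
    (hg_bound : ∀ k, ∀ d : Fin D, |g k d| ≤ G)
    -- the MADGRAD recursion
    (hx0 : x 0 = x0) (hs0 : s 0 = 0) (hv0 : v 0 = 0)
    (hs : ∀ k : ℕ, s (k + 1) = s k + lam k • g k)
    (hv : ∀ (k : ℕ) (d : Fin D), v (k + 1) d = v k d + lam k * (g k d) ^ 2)
    (ha : ∀ (k : ℕ) (d : Fin D), a k d = (lam k * G ^ 2 + v k d) ^ ((1 : ℝ) / 3))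
    (hz : ∀ (k : ℕ) (d : Fin D), z (k + 1) d = x0 d - s (k + 1) d / a (k + 1) d)
    (hx : ∀ k : ℕ, x (k + 1) = (1 - c (k + 1)) • x k + c (k + 1) • z (k + 1)) :
    V (a 1) (-(s 1)) ≤ (lam 0) ^ 2 / 2 * ∑ d : Fin D, (g 0 d) ^ 2 / a 0 d := by
  have hlam0 : lam 0 = γ := by
    rw [hlam]; simp
  have hlam0pos : 0 < lam 0 := by rw [hlam0]; exact hγ
  have hlam1pos : 0 < lam 1 := by
    rw [hlam]; positivity
  have hv0d : ∀ d, v 0 d = 0 := by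
    intro d; rw [hv0]; rfl
  have hv1d : ∀ d, v 1 d = lam 0 * (g 0 d) ^ 2 := by
    intro d; rw [hv 0 d, hv0d]; ring
  have hlam01 : lam 0 ≤ lam 1 := by
    rw [hlam, hlam]
    have : Real.sqrt ((0:ℕ) + 1) ≤ Real.sqrt ((1:ℕ) + 1) := by
      apply Real.sqrt_le_sqrt; norm_num
    nlinarith [this, Real.sqrt_nonneg ((0:ℝ)+1)]
  have ha0pos : ∀ d, 0 < a 0 d := by
    intro d
    rw [ha, hv0d]
    apply Real.rpow_pos_of_pos
    have : 0 < lam 0 * G ^ 2 := by positivity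
    linarith
  have ha01 : ∀ d, a 0 d ≤ a 1 d := by
    intro d
    rw [ha, ha, hv0d, hv1d]
    apply Real.rpow_le_rpow
    · have : 0 < lam 0 * G ^ 2 := by positivity
      linarith
    · nlinarith [sq_nonneg (g 0 d), hlam0pos]
    · norm_num
  have ha1pos : ∀ d, 0 < a 1 d := fun d => lt_of_lt_of_le (ha0pos d) (ha01 d)
  have hs1 : ∀ d, s 1 d = lam 0 * g 0 d := by
    intro d
    rw [hs 0, hs0]
    simp [PiLp.add_apply, PiLp.smul_apply, smul_eq_mul]
  have hMnn : 0 ≤ (lam 0) ^ 2 / 2 * ∑ d : Fin D, (g 0 d) ^ 2 / a 0 d := by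
    apply mul_nonneg (by positivity)
    apply Finset.sum_nonneg
    intro d _
    exact div_nonneg (sq_nonneg _) (ha0pos d).le
  rw [hV]
  apply Real.iSup_le _ hMnn
  intro y
  have hinner : ⟪-(s 1), y - x0⟫ = ∑ d : Fin D, (-(s 1) d) * (y d - x0 d) := by
    rw [PiLp.inner_apply]
    apply Finset.sum_congr rfl
    intro d _
    simp [PiLp.sub_apply, RCLike.inner_apply]
    ring
  rw [hinner, Finset.mul_sum, Finset.mul_sum, ← Finset.sum_sub_distrib]
  apply Finset.sum_le_sum
  intro d _
  rw [hs1]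
  have h1 : -(lam 0 * g 0 d) * (y d - x0 d) - 1 / 2 * (a 1 d * (y d - x0 d) ^ 2)
      ≤ lam 0 ^ 2 * g 0 d ^ 2 / (2 * a 1 d) := by
    rw [le_div_iff₀ (by nlinarith [ha1pos d])]
    nlinarith [sq_nonneg (a 1 d * (y d - x0 d) + lam 0 * g 0 d), ha1pos d]
  have h2 : lam 0 ^ 2 * g 0 d ^ 2 / (2 * a 1 d) ≤ lam 0 ^ 2 / 2 * (g 0 d ^ 2 / a 0 d) := by
    rw [div_mul_div_comm]
    exact div_le_div_of_nonneg_left (by positivity)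
      (by have := ha0pos d; linarith) (by have := ha01 d; linarith)
  linarith
end

section
/- (Lyapunov step, inductive case.) For every integer k ≥ 1 and every x_* ∈ ℝ^D, the MADGRAD quantities satisfy V_{a_{k+1}}(−s_{k+1}) ≤ V_{a_k}(−s_k) + (λ_k² / 2) ∑_{d=1}^{D} g_{k,d}² / a_{k,d} + λ_k ⟨g_k, x_0 − x_*⟩ − (λ_k / c_k) (f_k(x_k) − f_k(x_*)) + λ_k ((1 − c_k)/c_k) (f_k(x_{k−1}) − f_k(x_*)). -/
open Finset
open scoped RealInnerProductSpace

/-- Lyapunov step, inductive case: for every `k ≥ 1` and every `x_*`,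
`V_{a_{k+1}}(−s_{k+1}) ≤ V_{a_k}(−s_k) + (λ_k²/2) ∑_d g_{k,d}²/a_{k,d}
  + λ_k ⟨g_k, x_0 − x_*⟩ − (λ_k/c_k)(f_k(x_k) − f_k(x_*))
  + λ_k ((1 − c_k)/c_k)(f_k(x_{k−1}) − f_k(x_*))`. -/
theorem madgrad_lyapunov_inductive (D : ℕ) (hD : 1 ≤ D) (G γ : ℝ) (hG : 0 < G)
    (hγ : 0 < γ) (x0 : EuclideanSpace ℝ (Fin D))
    -- support-type function
    (V : (Fin D → ℝ) → EuclideanSpace ℝ (Fin D) → ℝ)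
    (hV : ∀ (b : Fin D → ℝ) (u : EuclideanSpace ℝ (Fin D)),
      V b u = ⨆ x : EuclideanSpace ℝ (Fin D),
        (⟪u, x - x0⟫ - (1 / 2) * ∑ d : Fin D, b d * (x d - x0 d) ^ 2))
    -- step-size and momentum sequences
    (lam c : ℕ → ℝ)
    (hlam : ∀ k : ℕ, lam k = γ * Real.sqrt ((k : ℝ) + 1))
    (hc : ∀ k : ℕ, c k = (3 / 2) / ((k : ℝ) + 3 / 2))
    -- convex losses and subgradients
    (f : ℕ → EuclideanSpace ℝ (Fin D) → ℝ)
    (hf : ∀ k, ConvexOn ℝ Set.univ (f k))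
    (x z : ℕ → EuclideanSpace ℝ (Fin D))
    (s v : ℕ → EuclideanSpace ℝ (Fin D)) (a : ℕ → Fin D → ℝ)
    (g : ℕ → EuclideanSpace ℝ (Fin D))
    (hg_subgrad : ∀ k, ∀ y : EuclideanSpace ℝ (Fin D),
      f k (x k) + ⟪g k, y - x k⟫ ≤ f k y)
    (hg_bound : ∀ k, ∀ d : Fin D, |g k d| ≤ G)
    -- the MADGRAD recursion
    (hx0 : x 0 = x0) (hs0 : s 0 = 0) (hv0 : v 0 = 0)
    (hs : ∀ k : ℕ, s (k + 1) = s k + lam k • g k)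
    (hv : ∀ (k : ℕ) (d : Fin D), v (k + 1) d = v k d + lam k * (g k d) ^ 2)
    (ha : ∀ (k : ℕ) (d : Fin D), a k d = (lam k * G ^ 2 + v k d) ^ ((1 : ℝ) / 3))
    (hz : ∀ (k : ℕ) (d : Fin D), z (k + 1) d = x0 d - s (k + 1) d / a (k + 1) d)
    (hx : ∀ k : ℕ, x (k + 1) = (1 - c (k + 1)) • x k + c (k + 1) • z (k + 1))
    (k : ℕ) (hk : 1 ≤ k) (xstar : EuclideanSpace ℝ (Fin D)) :
    V (a (k + 1)) (-(s (k + 1))) ≤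
      V (a k) (-(s k)) + (lam k) ^ 2 / 2 * ∑ d : Fin D, (g k d) ^ 2 / a k d
        + lam k * ⟪g k, x0 - xstar⟫
        - lam k / c k * (f k (x k) - f k xstar)
        + lam k * ((1 - c k) / c k) * (f k (x (k - 1)) - f k xstar) := by
  -- positivity facts
  have hlam_pos : ∀ n : ℕ, 0 < lam n := by
    intro n; rw [hlam]
    have : (0:ℝ) < Real.sqrt ((n : ℝ) + 1) := Real.sqrt_pos.mpr (by positivity)
    positivity
  have hv_nonneg : ∀ n (d : Fin D), 0 ≤ v n d := by
    intro n
    induction n with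
    | zero => intro d; rw [hv0]; rfl
    | succ n ih =>
      intro d; rw [hv n d]
      have h1 := hlam_pos n
      nlinarith [sq_nonneg (g n d), ih d]
  have hbase_pos : ∀ n (d : Fin D), 0 < lam n * G ^ 2 + v n d := by
    intro n d
    have h1 := mul_pos (hlam_pos n) (pow_pos hG 2)
    linarith [hv_nonneg n d]
  have ha_pos : ∀ n (d : Fin D), 0 < a n d := by
    intro n d; rw [ha]; exact Real.rpow_pos_of_pos (hbase_pos n d) _
  have hlam_mono : ∀ n : ℕ, lam n ≤ lam (n + 1) := by
    intro n; rw [hlam, hlam]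
    have : Real.sqrt ((n : ℝ) + 1) ≤ Real.sqrt (((n : ℝ) + 1) + 1) :=
      Real.sqrt_le_sqrt (by linarith)
    push_cast
    nlinarith [Real.sqrt_nonneg ((n:ℝ)+1)]
  have ha_mono : ∀ n (d : Fin D), a n d ≤ a (n + 1) d := by
    intro n d; rw [ha, ha]
    apply Real.rpow_le_rpow (le_of_lt (hbase_pos n d)) _ (by norm_num)
    rw [hv n d]
    have := hlam_mono n
    nlinarith [sq_nonneg G, sq_nonneg (g n d), hlam_pos n]
  -- pointwise bound on the sup's integrand
  have hpt : ∀ (b : Fin D → ℝ), (∀ d, 0 < b d) → ∀ (u xx : EuclideanSpace ℝ (Fin D)),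
      ⟪u, xx - x0⟫ - (1 / 2) * ∑ d : Fin D, b d * (xx d - x0 d) ^ 2
        ≤ (1 / 2) * ∑ d : Fin D, (u d) ^ 2 / b d := by
    intro b hb u xx
    have hinner : ⟪u, xx - x0⟫ = ∑ d : Fin D, u d * (xx d - x0 d) := by
      simp [PiLp.inner_apply, RCLike.inner_apply, conj_trivial]
      exact Finset.sum_congr rfl (fun _ _ => mul_comm _ _)
    rw [hinner, Finset.mul_sum, Finset.mul_sum, ← Finset.sum_sub_distrib]
    apply Finset.sum_le_sum
    intro d _
    have hbd := hb d
    rw [show (1:ℝ)/2 * ((u d) ^ 2 / b d) = (u d) ^ 2 / (2 * b d) by ring,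
      le_div_iff₀ (by positivity)]
    nlinarith [sq_nonneg (u d - b d * (xx d - x0 d))]
  have hVle : ∀ (b : Fin D → ℝ), (∀ d, 0 < b d) → ∀ u : EuclideanSpace ℝ (Fin D),
      V b u ≤ (1 / 2) * ∑ d : Fin D, (u d) ^ 2 / b d := by
    intro b hb u; rw [hV]
    exact ciSup_le (fun xx => hpt b hb u xx)
  have hVge : ∀ (b : Fin D → ℝ), (∀ d, 0 < b d) → ∀ u : EuclideanSpace ℝ (Fin D),
      (1 / 2) * ∑ d : Fin D, (u d) ^ 2 / b d ≤ V b u := by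
    intro b hb u; rw [hV]
    have hbdd : BddAbove (Set.range fun xx : EuclideanSpace ℝ (Fin D) =>
        ⟪u, xx - x0⟫ - (1 / 2) * ∑ d : Fin D, b d * (xx d - x0 d) ^ 2) := by
      refine ⟨(1 / 2) * ∑ d : Fin D, (u d) ^ 2 / b d, ?_⟩
      rintro y ⟨xx, rfl⟩
      exact hpt b hb u xx
    set xh : EuclideanSpace ℝ (Fin D) := x0 + (WithLp.equiv 2 _).symm (fun d => u d / b d) with hxh
    have hval : ⟪u, xh - x0⟫ - (1 / 2) * ∑ d : Fin D, b d * (xh d - x0 d) ^ 2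
        = (1 / 2) * ∑ d : Fin D, (u d) ^ 2 / b d := by
      have hinner : ⟪u, xh - x0⟫ = ∑ d : Fin D, u d * (xh d - x0 d) := by
        simp [PiLp.inner_apply, RCLike.inner_apply, conj_trivial]
        exact Finset.sum_congr rfl (fun _ _ => mul_comm _ _)
      have hxhd : ∀ d, xh d - x0 d = u d / b d := fun d => by
        show x0 d + u d / b d - x0 d = u d / b d; ring
      have hL : ∑ d : Fin D, u d * (xh d - x0 d) = ∑ d : Fin D, (u d) ^ 2 / b d := by
        apply Finset.sum_congr rfl
        intro d _
        rw [hxhd d]; ring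
      have hR : ∑ d : Fin D, b d * (xh d - x0 d) ^ 2 = ∑ d : Fin D, (u d) ^ 2 / b d := by
        apply Finset.sum_congr rfl
        intro d _
        rw [hxhd d]
        first
        | (field_simp [(hb d).ne']; ring)
        | field_simp [(hb d).ne']
        | (field_simp; ring)
      rw [hinner, hL, hR]; ring
    calc (1 / 2) * ∑ d : Fin D, (u d) ^ 2 / b d
        = ⟪u, xh - x0⟫ - (1 / 2) * ∑ d : Fin D, b d * (xh d - x0 d) ^ 2 := hval.symm
      _ ≤ _ := le_ciSup hbdd xh
  -- set k = m + 1
  obtain ⟨m, rfl⟩ : ∃ m, k = m + 1 := ⟨k - 1, by omega⟩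
  rw [show m + 1 - 1 = m from rfl]
  -- facts about c
  have hc_pos : 0 < c (m + 1) := by rw [hc]; positivity
  have hc_le : c (m + 1) ≤ 1 := by
    rw [hc, div_le_one (by positivity)]
    have : (0:ℝ) ≤ ((m + 1 : ℕ) : ℝ) := Nat.cast_nonneg _
    linarith
  have hc0 : c (m + 1) ≠ 0 := ne_of_gt hc_pos
  -- z identity
  have hxz : x (m + 1) = (1 - c (m + 1)) • x m + c (m + 1) • z (m + 1) := hx m
  have hz' : z (m + 1) = (c (m + 1))⁻¹ • (x (m + 1) - (1 - c (m + 1)) • x m) := by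
    rw [hxz]
    match_scalars <;> field_simp <;> ring
  have hzid : xstar - z (m + 1)
      = (xstar - x (m + 1)) + ((1 - c (m + 1)) / c (m + 1)) • (x m - x (m + 1)) := by
    rw [hz']
    match_scalars <;> field_simp <;> ring
  -- key inner-product inequality
  have hinner_z : ⟪g (m + 1), xstar - z (m + 1)⟫
      ≤ -(1 / c (m + 1)) * (f (m + 1) (x (m + 1)) - f (m + 1) xstar)
        + ((1 - c (m + 1)) / c (m + 1)) * (f (m + 1) (x m) - f (m + 1) xstar) := by
    have h1 := hg_subgrad (m + 1) xstar
    have h2 := hg_subgrad (m + 1) (x m)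
    rw [hzid, inner_add_right, real_inner_smul_right]
    have hcc : 0 ≤ (1 - c (m + 1)) / c (m + 1) := div_nonneg (by linarith) hc_pos.le
    have h2' : (1 - c (m + 1)) / c (m + 1) * ⟪g (m + 1), x m - x (m + 1)⟫
        ≤ (1 - c (m + 1)) / c (m + 1) * (f (m + 1) (x m) - f (m + 1) (x (m + 1))) :=
      mul_le_mul_of_nonneg_left (by linarith) hcc
    have hid : -(1 / c (m + 1)) * (f (m + 1) (x (m + 1)) - f (m + 1) xstar)
          + ((1 - c (m + 1)) / c (m + 1)) * (f (m + 1) (x m) - f (m + 1) xstar)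
        = (f (m + 1) xstar - f (m + 1) (x (m + 1)))
          + (1 - c (m + 1)) / c (m + 1) * (f (m + 1) (x m) - f (m + 1) (x (m + 1))) := by
      field_simp; ring
    rw [hid]
    linarith
  -- main chain
  have hA : V (a (m + 1 + 1)) (-(s (m + 1 + 1)))
      ≤ (1 / 2) * ∑ d : Fin D, (s (m + 1 + 1) d) ^ 2 / a (m + 1 + 1) d := by
    have h := hVle (a (m + 1 + 1)) (fun d => ha_pos _ d) (-(s (m + 1 + 1)))
    have hsum : ∑ d : Fin D, ((-(s (m + 1 + 1))) d) ^ 2 / a (m + 1 + 1) d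
        = ∑ d : Fin D, (s (m + 1 + 1) d) ^ 2 / a (m + 1 + 1) d := by
      apply Finset.sum_congr rfl
      intro d _
      show (-(s (m + 1 + 1) d)) ^ 2 / _ = _
      rw [neg_sq]
    rwa [hsum] at h
  have hB : (1 / 2) * ∑ d : Fin D, (s (m + 1) d) ^ 2 / a (m + 1) d
      ≤ V (a (m + 1)) (-(s (m + 1))) := by
    have h := hVge (a (m + 1)) (fun d => ha_pos _ d) (-(s (m + 1)))
    have hsum : ∑ d : Fin D, ((-(s (m + 1))) d) ^ 2 / a (m + 1) d
        = ∑ d : Fin D, (s (m + 1) d) ^ 2 / a (m + 1) d := by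
      apply Finset.sum_congr rfl
      intro d _
      show (-(s (m + 1) d)) ^ 2 / _ = _
      rw [neg_sq]
    rwa [hsum] at h
  have hmono : (1 / 2 : ℝ) * ∑ d : Fin D, (s (m + 1 + 1) d) ^ 2 / a (m + 1 + 1) d
      ≤ (1 / 2) * ∑ d : Fin D, (s (m + 1 + 1) d) ^ 2 / a (m + 1) d := by
    apply mul_le_mul_of_nonneg_left _ (by norm_num : (0:ℝ) ≤ 1 / 2)
    apply Finset.sum_le_sum
    intro d _
    exact div_le_div_of_nonneg_left (sq_nonneg _) (ha_pos (m + 1) d) (ha_mono (m + 1) d)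
  have hexp : (1 / 2 : ℝ) * ∑ d : Fin D, (s (m + 1 + 1) d) ^ 2 / a (m + 1) d
      = (1 / 2) * ∑ d : Fin D, (s (m + 1) d) ^ 2 / a (m + 1) d
        + lam (m + 1) * ∑ d : Fin D, (s (m + 1) d / a (m + 1) d) * g (m + 1) d
        + (lam (m + 1)) ^ 2 / 2 * ∑ d : Fin D, (g (m + 1) d) ^ 2 / a (m + 1) d := by
    rw [Finset.mul_sum, Finset.mul_sum, Finset.mul_sum, Finset.mul_sum,
      ← Finset.sum_add_distrib, ← Finset.sum_add_distrib]
    apply Finset.sum_congr rfl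
    intro d _
    have hsd : s (m + 1 + 1) d = s (m + 1) d + lam (m + 1) * g (m + 1) d := by
      rw [hs (m + 1)]; rfl
    rw [hsd]; ring
  have hcross : ∑ d : Fin D, (s (m + 1) d / a (m + 1) d) * g (m + 1) d
      = ⟪g (m + 1), x0 - xstar⟫ + ⟪g (m + 1), xstar - z (m + 1)⟫ := by
    rw [← inner_add_right, show (x0 - xstar) + (xstar - z (m + 1)) = x0 - z (m + 1) by abel]
    have hinner : ⟪g (m + 1), x0 - z (m + 1)⟫
        = ∑ d : Fin D, g (m + 1) d * (x0 d - z (m + 1) d) := by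
      simp [PiLp.inner_apply, RCLike.inner_apply, conj_trivial]
      exact Finset.sum_congr rfl (fun _ _ => mul_comm _ _)
    rw [hinner]
    apply Finset.sum_congr rfl
    intro d _
    rw [hz m d]
    ring
  have hlamnn : (0:ℝ) ≤ lam (m + 1) := (hlam_pos (m + 1)).le
  have hmul := mul_le_mul_of_nonneg_left hinner_z hlamnn
  have hrg : lam (m + 1) * (-(1 / c (m + 1)) * (f (m + 1) (x (m + 1)) - f (m + 1) xstar)
        + ((1 - c (m + 1)) / c (m + 1)) * (f (m + 1) (x m) - f (m + 1) xstar))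
      = -(lam (m + 1) / c (m + 1) * (f (m + 1) (x (m + 1)) - f (m + 1) xstar))
        + lam (m + 1) * ((1 - c (m + 1)) / c (m + 1)) * (f (m + 1) (x m) - f (m + 1) xstar) := by
    ring
  have hcross' : lam (m + 1) * ∑ d : Fin D, (s (m + 1) d / a (m + 1) d) * g (m + 1) d
      = lam (m + 1) * ⟪g (m + 1), x0 - xstar⟫
        + lam (m + 1) * ⟪g (m + 1), xstar - z (m + 1)⟫ := by
    rw [hcross]; ring
  linarith [hA, hmono, hB, hexp, hcross', hmul, hrg]
end

section
/- Let G > 0, let (λ_t)_{t≥0} be a nondecreasing sequence of strictly positive reals, and let (g_t)_{t≥0} be reals with g_t² ≤ G² for all t. Then for every integer k ≥ 0: ∑_{t=0}^{k} λ_t² g_t² / (λ_t G² + ∑_{i=0}^{t−1} λ_i g_i²)^{1/3} ≤ (3/2) λ_k (∑_{i=0}^{k} λ_i g_i²)^{2/3}. -/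
open Finset

private lemma cube_key (x a : ℝ) (hx : 0 ≤ x) (ha : 0 ≤ a) :
    a / (x + a) ^ ((1 : ℝ) / 3) ≤ 3 / 2 * ((x + a) ^ ((2 : ℝ) / 3) - x ^ ((2 : ℝ) / 3)) := by
  rcases eq_or_lt_of_le (by linarith : (0:ℝ) ≤ x + a) with h | h
  · have ha0 : a = 0 := by linarith
    have hx0 : x = 0 := by linarith
    simp [ha0, hx0]
  · set u := (x + a) ^ ((1 : ℝ) / 3) with hu
    set v := x ^ ((1 : ℝ) / 3) with hv
    have hupos : 0 < u := Real.rpow_pos_of_pos h _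
    have hvnn : 0 ≤ v := Real.rpow_nonneg hx _
    have hvu : v ≤ u := Real.rpow_le_rpow hx (by linarith) (by norm_num)
    have hu3 : u ^ 3 = x + a := by
      rw [hu, ← Real.rpow_natCast ((x+a) ^ ((1:ℝ)/3)) 3, ← Real.rpow_mul (by linarith)]
      norm_num
    have hv3 : v ^ 3 = x := by
      rw [hv, ← Real.rpow_natCast (x ^ ((1:ℝ)/3)) 3, ← Real.rpow_mul hx]
      norm_num
    have hxa2 : (x + a) ^ ((2 : ℝ) / 3) = u ^ 2 := by
      rw [hu, ← Real.rpow_natCast ((x+a) ^ ((1:ℝ)/3)) 2, ← Real.rpow_mul (by linarith)]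
      norm_num
    have hx2 : x ^ ((2 : ℝ) / 3) = v ^ 2 := by
      rw [hv, ← Real.rpow_natCast (x ^ ((1:ℝ)/3)) 2, ← Real.rpow_mul hx]
      norm_num
    rw [hxa2, hx2, div_le_iff₀ hupos]
    nlinarith [sq_nonneg (u - v), mul_nonneg (mul_nonneg (sub_nonneg.2 hvu) (sub_nonneg.2 hvu)) (by linarith : (0:ℝ) ≤ u + 2 * v)]

/-- Let `G > 0`, `(λ_t)` nondecreasing strictly positive, `g_t² ≤ G²`. Then for every `k ≥ 0`:
`∑_{t=0}^{k} λ_t² g_t² / (λ_t G² + ∑_{i=0}^{t−1} λ_i g_i²)^{1/3}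
  ≤ (3/2) λ_k (∑_{i=0}^{k} λ_i g_i²)^{2/3}`. -/
theorem error_sum_bound (G : ℝ) (hG : 0 < G) (lam : ℕ → ℝ)
    (hpos : ∀ t, 0 < lam t) (hmono : Monotone lam)
    (g : ℕ → ℝ) (hb : ∀ t, (g t) ^ 2 ≤ G ^ 2) (k : ℕ) :
    ∑ t ∈ Finset.range (k + 1),
        (lam t) ^ 2 * (g t) ^ 2 /
          (lam t * G ^ 2 + ∑ i ∈ Finset.range t, lam i * (g i) ^ 2) ^ ((1 : ℝ) / 3)
      ≤ (3 / 2) * lam k * (∑ i ∈ Finset.range (k + 1), lam i * (g i) ^ 2) ^ ((2 : ℝ) / 3) := by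
  set S : ℕ → ℝ := fun t => ∑ i ∈ Finset.range t, lam i * (g i) ^ 2 with hS
  have hSnn : ∀ t, 0 ≤ S t := fun t =>
    Finset.sum_nonneg fun i _ => mul_nonneg (hpos i).le (sq_nonneg _)
  have hterm : ∀ t ∈ Finset.range (k + 1),
      (lam t) ^ 2 * (g t) ^ 2 / (lam t * G ^ 2 + S t) ^ ((1 : ℝ) / 3)
        ≤ lam k * (3 / 2 * ((S (t + 1)) ^ ((2 : ℝ) / 3) - (S t) ^ ((2 : ℝ) / 3))) := by
    intro t ht
    have htk : lam t ≤ lam k := hmono (Nat.lt_succ_iff.mp (Finset.mem_range.mp ht))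
    set a := lam t * (g t) ^ 2 with hadef
    have hann : 0 ≤ a := mul_nonneg (hpos t).le (sq_nonneg _)
    have hSucc : S (t + 1) = S t + a := Finset.sum_range_succ _ _
    have hnum : (lam t) ^ 2 * (g t) ^ 2 = lam t * a := by rw [hadef]; ring
    have hkey := cube_key (S t) a (hSnn t) hann
    rcases eq_or_lt_of_le hann with h0 | h0
    · rw [hnum, ← h0, mul_zero, zero_div]
      have : (S t) ^ ((2:ℝ)/3) ≤ (S (t+1)) ^ ((2:ℝ)/3) := by
        apply Real.rpow_le_rpow (hSnn t) (by rw [hSucc]; linarith) (by norm_num)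
      have := (hpos k).le
      nlinarith
    · have hxa : 0 < S t + a := by linarith [hSnn t]
      have hden : S t + a ≤ lam t * G ^ 2 + S t := by
        have : a ≤ lam t * G ^ 2 := by
          rw [hadef]; exact mul_le_mul_of_nonneg_left (hb t) (hpos t).le
        linarith
      have hd13 : (S t + a) ^ ((1:ℝ)/3) ≤ (lam t * G ^ 2 + S t) ^ ((1:ℝ)/3) :=
        Real.rpow_le_rpow hxa.le hden (by norm_num)
      have hd13pos : 0 < (S t + a) ^ ((1:ℝ)/3) := Real.rpow_pos_of_pos hxa _
      calc (lam t) ^ 2 * (g t) ^ 2 / (lam t * G ^ 2 + S t) ^ ((1 : ℝ) / 3)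
          = lam t * a / (lam t * G ^ 2 + S t) ^ ((1 : ℝ) / 3) := by rw [hnum]
        _ ≤ lam t * a / (S t + a) ^ ((1:ℝ)/3) := by
            apply div_le_div_of_nonneg_left (mul_nonneg (hpos t).le hann) hd13pos hd13
        _ ≤ lam k * (a / (S t + a) ^ ((1:ℝ)/3)) := by
            rw [mul_div_assoc]
            exact mul_le_mul_of_nonneg_right htk (div_nonneg hann hd13pos.le)
        _ ≤ lam k * (3 / 2 * ((S (t + 1)) ^ ((2 : ℝ) / 3) - (S t) ^ ((2 : ℝ) / 3))) := by
            rw [hSucc]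
            exact mul_le_mul_of_nonneg_left hkey (hpos k).le
  calc ∑ t ∈ Finset.range (k + 1),
        (lam t) ^ 2 * (g t) ^ 2 / (lam t * G ^ 2 + S t) ^ ((1 : ℝ) / 3)
      ≤ ∑ t ∈ Finset.range (k + 1),
          lam k * (3 / 2 * ((S (t + 1)) ^ ((2 : ℝ) / 3) - (S t) ^ ((2 : ℝ) / 3))) :=
        Finset.sum_le_sum hterm
    _ = lam k * (3 / 2 * ((S (k + 1)) ^ ((2 : ℝ) / 3) - (S 0) ^ ((2 : ℝ) / 3))) := by
        rw [← Finset.mul_sum, ← Finset.mul_sum, Finset.sum_range_sub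
          (fun n => (S n) ^ ((2 : ℝ) / 3))]
    _ = (3 / 2) * lam k * (S (k + 1)) ^ ((2 : ℝ) / 3) := by
        have : S 0 = 0 := by simp [hS]
        rw [this, Real.zero_rpow (by norm_num)]
        ring
end

section
/- Let 0 < r < 1 and j ≥ 0 be reals, and define c_k := (r + 1)/(k + j + r). Then for every integer k ≥ 1: ((1 − c_k)/c_k) · (k + j)^r ≤ (1/c_{k−1}) · (k + j − 1)^r. -/
lemma key_aux (r : ℝ) (hr0 : 0 < r) (hr1 : r ≤ 1) {x : ℝ} (hx : 0 ≤ x) :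
    x * (x + 1) ^ r ≤ (x + r) * x ^ r := by
  rcases hx.eq_or_lt with rfl | hx
  · simp [Real.zero_rpow hr0.ne']
  · have hx' : x ≠ 0 := hx.ne'
    have h1 : (0:ℝ) ≤ 1 + 1 / x := by positivity
    have hb : (1 + 1 / x) ^ r ≤ 1 + r * (1 / x) :=
      rpow_one_add_le_one_add_mul_self (le_trans (by norm_num) (one_div_nonneg.mpr hx.le)) hr0.le hr1
    have hfact : x + 1 = x * (1 + 1 / x) := by field_simp
    calc x * (x + 1) ^ r = x * (x ^ r * (1 + 1 / x) ^ r) := by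
            rw [hfact, Real.mul_rpow hx.le h1]
      _ ≤ x * (x ^ r * (1 + r * (1 / x))) := by
            have hxr : (0:ℝ) ≤ x ^ r := Real.rpow_nonneg hx.le r
            nlinarith [mul_le_mul_of_nonneg_left hb hxr]
      _ = (x + r) * x ^ r := by field_simp

/-- Let `0 < r < 1` and `j ≥ 0` be reals, and define `c_k := (r+1)/(k+j+r)`.
Then for every integer `k ≥ 1`:
`((1 − c_k)/c_k) (k+j)^r ≤ (1/c_{k−1}) (k+j−1)^r`. -/
theorem ck_iterate_weighting (r j : ℝ) (hr0 : 0 < r) (hr1 : r < 1) (hj : 0 ≤ j)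
    (c : ℕ → ℝ) (hc : ∀ k : ℕ, c k = (r + 1) / ((k : ℝ) + j + r))
    (k : ℕ) (hk : 1 ≤ k) :
    ((1 - c k) / c k) * ((k : ℝ) + j) ^ r
      ≤ (1 / c (k - 1)) * ((k : ℝ) + j - 1) ^ r := by
  have hk1 : (1:ℝ) ≤ (k:ℝ) := by exact_mod_cast hk
  have hkcast : ((k - 1 : ℕ) : ℝ) = (k : ℝ) - 1 := by
    have := Nat.cast_sub hk (R := ℝ); simpa using this
  have hden : (0:ℝ) < (k:ℝ) + j + r := by linarith
  have hden' : (0:ℝ) < (k:ℝ) - 1 + j + r := by linarith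
  have hr1' : (0:ℝ) < r + 1 := by linarith
  have h1 : (1 - c k) / c k = ((k:ℝ) + j - 1) / (r + 1) := by
    rw [hc k]; field_simp; ring
  have h2 : 1 / c (k - 1) = ((k:ℝ) - 1 + j + r) / (r + 1) := by
    rw [hc (k-1), hkcast]; field_simp
  rw [h1, h2]
  set x : ℝ := (k:ℝ) + j - 1 with hxdef
  have hx : 0 ≤ x := by simp only [hxdef]; linarith
  have key := key_aux r hr0 hr1.le hx
  have hx1 : (k:ℝ) + j = x + 1 := by simp [hxdef]
  have hx2 : (k:ℝ) - 1 + j + r = x + r := by simp only [hxdef]; ring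
  rw [hx1, hx2, div_mul_eq_mul_div, div_mul_eq_mul_div, div_le_div_iff_of_pos_right hr1']
  exact key
end

section
/- (Cube-root formulation.) Let k ≥ 0, D ≥ 1 be integers, c > 0 a real, and g : {0,…,k} × {1,…,D} → ℝ a matrix such that ∑_{i=0}^{k} g_{id}² > 0 for every d. Define s*_d := √c · (∑_{i=0}^{k} g_{id}²)^{1/3} / (∑_{d'=1}^{D} (∑_{i=0}^{k} g_{id'}²)^{2/3})^{1/2}. Then s* has strictly positive entries, ‖s*‖₂² = c, and for every s ∈ ℝ^D with s_d > 0 for all d and ‖s‖₂² ≤ c it holds that ∑_{i=0}^{k} ∑_{d=1}^{D} g_{id}²/s*_d ≤ ∑_{i=0}^{k} ∑_{d=1}^{D} g_{id}²/s_d. In particular, s_d ∝ (∑_{i=0}^{k} g_{id}²)^{1/3} solves min_s ∑_{i,d} g_{id}²/s_d subject to ‖s‖₂² ≤ c and s_d > 0. -/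
open Finset

/-- Cube-root formulation: `s*_d ∝ (∑_i g_{id}²)^{1/3}` (normalized so that `‖s*‖₂² = c`)
solves `min_s ∑_{i,d} g_{id}²/s_d` subject to `‖s‖₂² ≤ c` and `s_d > 0`. -/
theorem cube_root_formulation (k D : ℕ) (hD : 1 ≤ D) (c : ℝ) (hc : 0 < c)
    (g : Fin (k + 1) → Fin D → ℝ)
    (hg : ∀ d : Fin D, 0 < ∑ i : Fin (k + 1), (g i d) ^ 2)
    (sstar : Fin D → ℝ)
    (hsstar : ∀ d : Fin D, sstar d =
      Real.sqrt c * (∑ i : Fin (k + 1), (g i d) ^ 2) ^ ((1 : ℝ) / 3) /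
        (∑ d' : Fin D, (∑ i : Fin (k + 1), (g i d') ^ 2) ^ ((2 : ℝ) / 3)) ^ ((1 : ℝ) / 2)) :
    (∀ d : Fin D, 0 < sstar d) ∧
      (∑ d : Fin D, (sstar d) ^ 2 = c) ∧
      ∀ s : Fin D → ℝ, (∀ d, 0 < s d) → (∑ d : Fin D, (s d) ^ 2 ≤ c) →
        ∑ i : Fin (k + 1), ∑ d : Fin D, (g i d) ^ 2 / sstar d
          ≤ ∑ i : Fin (k + 1), ∑ d : Fin D, (g i d) ^ 2 / s d := by
  set A : Fin D → ℝ := fun d => ∑ i : Fin (k + 1), (g i d) ^ 2 with hA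
  set S : ℝ := ∑ d' : Fin D, (A d') ^ ((2 : ℝ) / 3) with hS
  haveI : Nonempty (Fin D) := Fin.pos_iff_nonempty.mp hD
  have hSpos : 0 < S := by
    apply Finset.sum_pos (fun d _ => Real.rpow_pos_of_pos (hg d) _) univ_nonempty
  have hsc : 0 < Real.sqrt c := Real.sqrt_pos.mpr hc
  have hSr : 0 < S ^ ((1 : ℝ) / 2) := Real.rpow_pos_of_pos hSpos _
  have hpos : ∀ d : Fin D, 0 < sstar d := fun d => by
    rw [hsstar d]
    exact div_pos (mul_pos hsc (Real.rpow_pos_of_pos (hg d) _)) hSr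
  refine ⟨hpos, ?_, ?_⟩
  · have : ∀ d : Fin D, (sstar d) ^ 2 = c * (A d) ^ ((2 : ℝ) / 3) / S := by
      intro d
      rw [hsstar d, div_pow, mul_pow, Real.sq_sqrt hc.le]
      congr 1
      · congr 1
        rw [← Real.rpow_natCast ((A d) ^ ((1:ℝ)/3)) 2, ← Real.rpow_mul (hg d).le]
        norm_num
        rfl
      · rw [← Real.rpow_natCast (S ^ ((1:ℝ)/2)) 2, ← Real.rpow_mul hSpos.le]
        norm_num
    rw [Finset.sum_congr rfl fun d _ => this d, ← Finset.sum_div, ← Finset.mul_sum, ← hS,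
      mul_div_assoc, div_self hSpos.ne', mul_one]
  · intro s hs hsle
    have key : ∀ (t : Fin D → ℝ), (∀ d, 0 < t d) →
        ∑ i : Fin (k + 1), ∑ d : Fin D, (g i d) ^ 2 / t d = ∑ d : Fin D, A d / t d := by
      intro t ht
      rw [Finset.sum_comm]
      exact Finset.sum_congr rfl fun d _ => by rw [hA, ← Finset.sum_div]
    rw [key sstar hpos, key s hs]
    -- LHS value
    have hLHS : ∑ d : Fin D, A d / sstar d = S ^ ((3 : ℝ) / 2) / Real.sqrt c := by
      have step : ∀ d : Fin D, A d / sstar d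
          = (A d) ^ ((2 : ℝ) / 3) * (S ^ ((1:ℝ)/2) / Real.sqrt c) := by
        intro d
        have hA13 : (0:ℝ) < (A d) ^ ((1:ℝ)/3) := Real.rpow_pos_of_pos (hg d) _
        have hA23 : (A d) ^ ((2:ℝ)/3) * (A d) ^ ((1:ℝ)/3) = A d := by
          rw [← Real.rpow_add (hg d)]; norm_num; rfl
        have hAd : (∑ i : Fin (k + 1), (g i d) ^ 2) = A d := rfl
        rw [hsstar d, hAd, div_div_eq_mul_div]
        field_simp
        linear_combination (-1 : ℝ) * hA23
      rw [Finset.sum_congr rfl fun d _ => step d, ← Finset.sum_mul, ← hS, ← mul_div_assoc]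
      congr 1
      nth_rewrite 1 [← Real.rpow_one S]
      rw [← Real.rpow_add hSpos]
      norm_num
    rw [hLHS]
    set T : ℝ := ∑ d : Fin D, A d / s d with hT
    have hTpos : 0 < T :=
      Finset.sum_pos (fun d _ => div_pos (hg d) (hs d)) univ_nonempty
    set Q : ℝ := ∑ d : Fin D, (s d) ^ 2 with hQ
    have hQpos : 0 < Q :=
      Finset.sum_pos (fun d _ => pow_pos (hs d) 2) univ_nonempty
    -- Hölder: S ≤ T^(2/3) * Q^(1/3)
    have holder : S ≤ T ^ ((2 : ℝ) / 3) * Q ^ ((1 : ℝ) / 3) := by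
      have hpq : Real.HolderConjugate (3/2) 3 := by
        constructor <;> norm_num
      have hmain := Real.inner_le_Lp_mul_Lq_of_nonneg (s := Finset.univ)
        (f := fun d => (A d / s d) ^ ((2 : ℝ) / 3))
        (g := fun d => (s d) ^ ((2 : ℝ) / 3)) hpq
        (fun d _ => (Real.rpow_pos_of_pos (div_pos (hg d) (hs d)) _).le)
        (fun d _ => (Real.rpow_pos_of_pos (hs d) _).le)
      have e1 : ∀ d : Fin D, (A d / s d) ^ ((2 : ℝ) / 3) * (s d) ^ ((2 : ℝ) / 3)
          = (A d) ^ ((2 : ℝ) / 3) := by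
        intro d
        rw [← Real.mul_rpow (div_pos (hg d) (hs d)).le (hs d).le, div_mul_cancel₀]
        exact (hs d).ne'
      have e2 : ∀ d : Fin D, ((A d / s d) ^ ((2 : ℝ) / 3)) ^ ((3:ℝ)/2) = A d / s d := by
        intro d
        rw [← Real.rpow_mul (div_pos (hg d) (hs d)).le]
        norm_num
        rfl
      have e3 : ∀ d : Fin D, ((s d) ^ ((2 : ℝ) / 3)) ^ ((3:ℝ)) = (s d) ^ 2 := by
        intro d
        rw [← Real.rpow_mul (hs d).le, ← Real.rpow_natCast (s d) 2]
        norm_num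
      calc S = ∑ d : Fin D, (A d / s d) ^ ((2 : ℝ) / 3) * (s d) ^ ((2 : ℝ) / 3) := by
              rw [hS]; exact Finset.sum_congr rfl fun d _ => (e1 d).symm
        _ ≤ (∑ d : Fin D, ((A d / s d) ^ ((2:ℝ)/3)) ^ ((3:ℝ)/2)) ^ (1/(3/2 : ℝ)) *
            (∑ d : Fin D, ((s d) ^ ((2:ℝ)/3)) ^ ((3:ℝ))) ^ (1/(3 : ℝ)) := hmain
        _ = T ^ ((2 : ℝ) / 3) * Q ^ ((1 : ℝ) / 3) := by
            rw [Finset.sum_congr rfl fun d _ => e2 d, Finset.sum_congr rfl fun d _ => e3 d,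
              ← hT, ← hQ]
            norm_num
    -- raise to 3/2
    have h32 : S ^ ((3:ℝ)/2) ≤ T * Q ^ ((1:ℝ)/2) := by
      have h := Real.rpow_le_rpow hSpos.le holder (by norm_num : (0:ℝ) ≤ 3/2)
      rw [Real.mul_rpow (Real.rpow_nonneg hTpos.le _) (Real.rpow_nonneg hQpos.le _),
        ← Real.rpow_mul hTpos.le, ← Real.rpow_mul hQpos.le] at h
      norm_num at h ⊢
      exact h
    have hQc : Q ^ ((1:ℝ)/2) ≤ Real.sqrt c := by
      rw [Real.sqrt_eq_rpow]
      exact Real.rpow_le_rpow hQpos.le hsle (by norm_num)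
    rw [div_le_iff₀ hsc]
    calc S ^ ((3:ℝ)/2) ≤ T * Q ^ ((1:ℝ)/2) := h32
      _ ≤ T * Real.sqrt c := mul_le_mul_of_nonneg_left hQc hTpos.le
end
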